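/- Explicit solution of the connection equation for a real Jordan block. Fix n ≥ 2, ε ∈ {+1, −1}, and let N ∈ Mat_n(ℝ) be the nilpotent Jordan block (N_{j,j+1} = 1 for 1 ≤ j ≤ n−1, all other entries 0) and G ∈ Mat_n(ℝ) the matrix with G_{ij} = ε if i + j = n + 1 and 0 otherwise. For u ∈ ℝ^n define M(u) ∈ Mat_n(ℝ) by: M_{1,1} = ((n−2)/2)·u_n; M_{1,j} = (n/2)·u_{n−j+1} for 2 ≤ j ≤ n−1; M_{1,n} = n·u_1; M_{j,j} = −u_n for 2 ≤ j ≤ n−1; M_{j,n} = (n/2)·u_j for 2 ≤ j ≤ n−1; M_{n,n} = ((n−2)/2)·u_n; all other entries 0. Define B(u) ∈ Mat_n(ℝ) by: B_{1,j} = (n/2)·u_{n−j} for 1 ≤ j ≤ n−1; B_{1,n} = 0; B_{j+1,j} = (j − n/2)·u_n for 1 ≤ j ≤ n−1; B_{j,n} = −(n/2)·u_{j−1} for 2 ≤ j ≤ n; all other entries 0. Then for every u ∈ ℝ^n, B(u) is the unique matrix B ∈ Mat_n(ℝ) satisfying both B N − N B = M(u) and Bᵀ G + G B = 0. -/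

import Mathlib

open Matrix


lemma sumS1 {n : ℕ} (A : Matrix (Fin n) (Fin n) ℝ) (i : Fin n) (j : ℕ) (hj : j < n) :
    ∑ k : Fin n, A i k * (if j = (k:ℕ) + 1 then (1:ℝ) else 0)
      = if h : 1 ≤ j then A i ⟨j - 1, by omega⟩ else 0 := by
  split_ifs with h
  · rw [Finset.sum_eq_single (⟨j-1, by omega⟩ : Fin n)]
    · rw [if_pos (show j = j - 1 + 1 by omega), mul_one]
    · intro b _ hb
      have hb' : (b:ℕ) ≠ j - 1 := fun h => hb (Fin.ext h)
      rw [if_neg (show ¬ j = (b:ℕ) + 1 by omega), mul_zero]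
    · simp
  · exact Finset.sum_eq_zero fun k _ => by rw [if_neg (by omega), mul_zero]

lemma sumS2 {n : ℕ} (A : Matrix (Fin n) (Fin n) ℝ) (i : ℕ) (hi : i < n) (j : Fin n) :
    ∑ k : Fin n, (if (k:ℕ) = i + 1 then (1:ℝ) else 0) * A k j
      = if h : i + 1 < n then A ⟨i+1, h⟩ j else 0 := by
  split_ifs with h
  · rw [Finset.sum_eq_single (⟨i+1, h⟩ : Fin n)]
    · rw [if_pos rfl, one_mul]
    · intro b _ hb
      have hb' : (b:ℕ) ≠ i + 1 := fun h => hb (Fin.ext h)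
      rw [if_neg hb', zero_mul]
    · simp
  · exact Finset.sum_eq_zero fun k _ => by
      rw [if_neg (show ¬ (k:ℕ) = i + 1 by have := k.isLt; omega), zero_mul]

lemma sumS3 {n : ℕ} (ε : ℝ) (A : Matrix (Fin n) (Fin n) ℝ) (i : ℕ) (hi : i < n) (j : Fin n) :
    ∑ k : Fin n, (if i + (k:ℕ) + 1 = n then ε else 0) * A k j
      = ε * A ⟨n - 1 - i, by omega⟩ j := by
  rw [Finset.sum_eq_single (⟨n - 1 - i, by omega⟩ : Fin n)]
  · rw [if_pos (show i + (n - 1 - i) + 1 = n by omega)]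
  · intro b _ hb
    have hb' : (b:ℕ) ≠ n - 1 - i := fun h => hb (Fin.ext h)
    rw [if_neg (show ¬ i + (b:ℕ) + 1 = n by have := b.isLt; omega), zero_mul]
  · simp

lemma sumS4 {n : ℕ} (ε : ℝ) (A : Matrix (Fin n) (Fin n) ℝ) (i : Fin n) (j : ℕ) (hj : j < n) :
    ∑ k : Fin n, A k i * (if (k:ℕ) + j + 1 = n then ε else 0)
      = ε * A ⟨n - 1 - j, by omega⟩ i := by
  rw [Finset.sum_eq_single (⟨n - 1 - j, by omega⟩ : Fin n)]
  · rw [if_pos (show (n - 1 - j) + j + 1 = n by omega), mul_comm]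
  · intro b _ hb
    have hb' : (b:ℕ) ≠ n - 1 - j := fun h => hb (Fin.ext h)
    rw [if_neg (show ¬ (b:ℕ) + j + 1 = n by have := b.isLt; omega), mul_zero]
  · simp

set_option maxHeartbeats 1000000 in
lemma Dzero {n : ℕ} (hn : 2 ≤ n) (ε : ℝ) (hε0 : ε ≠ 0)
    (D : Matrix (Fin n) (Fin n) ℝ)
    (hDN : D * (Matrix.of fun i j : Fin n => if (j:ℕ) = (i:ℕ) + 1 then (1:ℝ) else 0)
         = (Matrix.of fun i j : Fin n => if (j:ℕ) = (i:ℕ) + 1 then (1:ℝ) else 0) * D)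
    (hDG : Dᵀ * (Matrix.of fun i j : Fin n => if (i:ℕ) + (j:ℕ) + 1 = n then ε else 0)
         + (Matrix.of fun i j : Fin n => if (i:ℕ) + (j:ℕ) + 1 = n then ε else 0) * D = 0) :
    D = 0 := by
  have hn0 : 0 < n := by omega
  have hcomm : ∀ (a b : ℕ) (ha : a < n) (hb : b < n),
      (if h : 1 ≤ b then D ⟨a, ha⟩ ⟨b - 1, by omega⟩ else 0)
        = (if h : a + 1 < n then D ⟨a + 1, h⟩ ⟨b, hb⟩ else 0) := by
    intro a b ha hb
    have hh := congrFun (congrFun hDN ⟨a, ha⟩) ⟨b, hb⟩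
    simp only [Matrix.mul_apply, Matrix.of_apply] at hh
    rwa [sumS1 D ⟨a, ha⟩ b hb, sumS2 D a ha ⟨b, hb⟩] at hh
  have hT : ∀ (i j : ℕ) (hi : i < n) (hj : j < n),
      D ⟨i, hi⟩ ⟨j, hj⟩ = if i ≤ j then D ⟨0, hn0⟩ ⟨j - i, by omega⟩ else 0 := by
    intro i
    induction i with
    | zero =>
      intro j hi hj
      rw [if_pos (Nat.zero_le _)]
      exact congrArg₂ D (Fin.ext rfl) (Fin.ext (show j = j - 0 by omega))
    | succ m IH =>
      intro j hi hj
      by_cases hj0 : j = 0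
      · have hc := hcomm m j (by omega) hj
        rw [dif_neg (by omega), dif_pos (by omega)] at hc
        rw [if_neg (by omega)]
        exact hc.symm
      · have hc := hcomm m j (by omega) hj
        rw [dif_pos (by omega), dif_pos (by omega)] at hc
        rw [← hc, IH (j - 1) (by omega) (by omega)]
        by_cases hle : m + 1 ≤ j
        · rw [if_pos (by omega), if_pos (by omega)]
          exact congrArg (D ⟨0, hn0⟩) (Fin.ext (show j - 1 - m = j - (m + 1) by omega))
        · rw [if_neg (by omega), if_neg (by omega)]
  have hc0 : ∀ (k : ℕ) (hk : k < n), D ⟨0, hn0⟩ ⟨k, hk⟩ = 0 := by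
    intro k hk
    have hh := congrFun (congrFun hDG ⟨n - 1, by omega⟩) ⟨k, hk⟩
    simp only [Matrix.add_apply, Matrix.mul_apply, Matrix.transpose_apply,
      Matrix.zero_apply, Matrix.of_apply] at hh
    rw [sumS4 ε D ⟨n - 1, by omega⟩ k hk, sumS3 ε D (n - 1) (by omega) ⟨k, hk⟩] at hh
    rw [hT (n - 1 - k) (n - 1) (by omega) (by omega),
      hT (n - 1 - (n - 1)) k (by omega) hk] at hh
    rw [if_pos (by omega), if_pos (by omega)] at hh
    rw [show (⟨n - 1 - (n - 1 - k), by omega⟩ : Fin n) = ⟨k, hk⟩ from Fin.ext (show n - 1 - (n - 1 - k) = k by omega),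
      show (⟨k - (n - 1 - (n - 1)), by omega⟩ : Fin n) = ⟨k, hk⟩ from Fin.ext (show k - (n - 1 - (n - 1)) = k by omega)] at hh
    have h2 : ε * (2 * D ⟨0, hn0⟩ ⟨k, hk⟩) = 0 := by linarith [hh]
    rcases mul_eq_zero.mp h2 with h | h
    · exact absurd h hε0
    · linarith
  ext ⟨i, hi⟩ ⟨j, hj⟩
  rw [hT i j hi hj]
  split_ifs with h
  · rw [hc0]; rfl
  · rfl
set_option maxHeartbeats 2000000 in
/-- explicit solution of the connection equation for a real Jordan
block.  Indices in the informal statement are 1-based; here `Fin n` is 0-based,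
so the informal entry (I, J) is the entry (i, j) with I = i+1, J = j+1, and the
informal coordinate u_t is `u ⟨t-1, _⟩`. -/
theorem connection_equation_explicit_solution
    (n : ℕ) (hn : 2 ≤ n) (ε : ℝ) (hε : ε = 1 ∨ ε = -1) :
    let N : Matrix (Fin n) (Fin n) ℝ := fun i j => if (j : ℕ) = (i : ℕ) + 1 then 1 else 0
    let G : Matrix (Fin n) (Fin n) ℝ := fun i j => if (i : ℕ) + (j : ℕ) + 1 = n then ε else 0
    let M : (Fin n → ℝ) → Matrix (Fin n) (Fin n) ℝ := fun u i j =>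
      if (i : ℕ) = 0 ∧ (j : ℕ) = 0 then (((n : ℝ) - 2) / 2) * u ⟨n - 1, by omega⟩
      else if (i : ℕ) = 0 ∧ (j : ℕ) + 1 = n then (n : ℝ) * u ⟨0, by omega⟩
      else if (i : ℕ) = 0 then ((n : ℝ) / 2) * u ⟨n - 1 - (j : ℕ), by omega⟩
      else if (i : ℕ) = (j : ℕ) ∧ (j : ℕ) + 1 < n then -u ⟨n - 1, by omega⟩
      else if (j : ℕ) + 1 = n ∧ (i : ℕ) + 1 < n then ((n : ℝ) / 2) * u ⟨(i : ℕ), by omega⟩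
      else if (i : ℕ) + 1 = n ∧ (j : ℕ) + 1 = n then (((n : ℝ) - 2) / 2) * u ⟨n - 1, by omega⟩
      else 0
    let B : (Fin n → ℝ) → Matrix (Fin n) (Fin n) ℝ := fun u i j =>
      if (i : ℕ) = 0 ∧ (j : ℕ) + 1 = n then 0
      else if (i : ℕ) = 0 then ((n : ℝ) / 2) * u ⟨n - (j : ℕ) - 2, by omega⟩
      else if (j : ℕ) + 1 = n then -((n : ℝ) / 2) * u ⟨(i : ℕ) - 1, by omega⟩
      else if (i : ℕ) = (j : ℕ) + 1 then (((j : ℕ) + 1 : ℝ) - (n : ℝ) / 2) * u ⟨n - 1, by omega⟩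
      else 0
    ∀ u : Fin n → ℝ,
      (B u * N - N * B u = M u ∧ (B u)ᵀ * G + G * B u = 0) ∧
      ∀ B' : Matrix (Fin n) (Fin n) ℝ,
        B' * N - N * B' = M u → B'ᵀ * G + G * B' = 0 → B' = B u := by
  intro N G M B u
  obtain ⟨v, hv⟩ : ∃ v : ℕ → ℝ, ∀ (a : ℕ) (h : a < n), u ⟨a, h⟩ = v a :=
    ⟨fun t => if ht : t < n then u ⟨t, ht⟩ else 0, fun a h => by simp [h]⟩
  have e1 : B u * N - N * B u = M u := by
    ext ⟨i, hi⟩ ⟨j, hj⟩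
    simp only [Matrix.sub_apply, Matrix.mul_apply]
    simp only [N]
    rw [sumS1 (B u) ⟨i,hi⟩ j hj, sumS2 (B u) i hi ⟨j,hj⟩]
    simp only [B, M]
    split_ifs
    all_goals first
      | (exfalso; first | assumption | exact (And.left ‹False ∧ _›) | omega)
      | (simp only [hv]
         try rw [Nat.cast_sub (show 1 ≤ j by omega)]
         try rw [show n - (j - 1) - 2 = n - 1 - j by omega]
         try rw [show i + 1 - 1 = i by omega]
         try rw [show n - 1 - j = 0 by omega]
         try rw [show i = 0 by omega]
         try rw [show j = n - 1 by omega]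
         try rw [show j = 0 by omega]
         try rw [Nat.cast_sub (show 1 ≤ n by omega)]
         push_cast
         first | ring | norm_num)
      | norm_num
  have e2 : (B u)ᵀ * G + G * B u = 0 := by
    ext ⟨i, hi⟩ ⟨j, hj⟩
    simp only [Matrix.add_apply, Matrix.mul_apply, Matrix.transpose_apply,
      Matrix.zero_apply]
    simp only [G]
    rw [sumS4 ε (B u) ⟨i,hi⟩ j hj, sumS3 ε (B u) i hi ⟨j,hj⟩]
    simp only [B]
    split_ifs
    all_goals first
      | (exfalso; first | assumption | exact (And.left ‹False ∧ _›) | omega)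
      | (simp only [hv]
         try rw [show n - 1 - j - 1 = n - i - 2 by omega]
         try rw [show n - 1 - i - 1 = n - j - 2 by omega]
         try rw [show n - 1 - j = i + 1 by omega]
         try rw [show n - 1 - i = j + 1 by omega]
         try rw [show n - 1 - i - 1 = n - i - 2 by omega]
         try rw [show n - 1 - j - 1 = n - j - 2 by omega]
         try rw [show (j:ℕ) = n - 2 - i by omega]
         try rw [Nat.cast_sub (show i ≤ n - 2 by omega)]
         try rw [Nat.cast_sub (show 2 ≤ n by omega)]
         push_cast
         first | ring | norm_num)
      | norm_num
  refine ⟨⟨e1, e2⟩, ?_⟩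
  intro B' h1 h2
  have hε0 : ε ≠ 0 := by rcases hε with h | h <;> rw [h] <;> norm_num
  have hDN : (B' - B u) * N = N * (B' - B u) := by
    have k1 : B' * N = M u + N * B' := by rw [← h1]; abel
    have k2 : B u * N = M u + N * B u := by rw [← e1]; abel
    rw [Matrix.sub_mul, Matrix.mul_sub, k1, k2]; abel
  have hDG : (B' - B u)ᵀ * G + G * (B' - B u) = 0 := by
    rw [Matrix.transpose_sub, Matrix.sub_mul, Matrix.mul_sub,
      sub_add_sub_comm, h2, e2, sub_self]
  have h0 : B' - B u = 0 := Dzero hn ε hε0 (B' - B u) hDN hDG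
  exact sub_eq_zero.mp h0
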